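/- Let G' be a connected graph and x, v vertices of G' with N_{G'}[x] ⊆ N_{G'}[v]. If T' is a search tree on G' in which v is a descendant of x, then x has at most one child in T', and the tree p(T',x) obtained by eliminating x from T' is a search tree on G' − x. -/

import Mathlib

open scoped Classical

universe u

variable {V : Type u}

/-- A rooted tree structure on a support set: data only, well-formedness is `RTree.WF`. -/
structure RTree (V : Type u) where
  supp : Set V
  root : V
  parent : V → Option V

namespace RTree

def parentRel (T : RTree V) (a b : V) : Prop := T.parent a = some b

/-- `u` is an ancestor of `v` in `T` (reflexively). -/
def isAncestor (T : RTree V) (u v : V) : Prop :=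
  Relation.ReflTransGen T.parentRel v u

def WF (T : RTree V) : Prop :=
  T.root ∈ T.supp ∧
  T.parent T.root = none ∧
  (∀ v, v ∉ T.supp → T.parent v = none) ∧
  (∀ v ∈ T.supp, v ≠ T.root → ∃ u ∈ T.supp, T.parent v = some u) ∧
  (∀ v ∈ T.supp, T.isAncestor T.root v)

/-- The vertex set of the subtree `T|c` rooted at `c`. -/
def descendants (T : RTree V) (c : V) : Set V :=
  {v | v ∈ T.supp ∧ T.isAncestor c v}

/-- Iterated parent. -/
def pIter (T : RTree V) : ℕ → V → Option V
  | 0, w => some w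
  | n + 1, w => (T.parent w).bind (T.pIter n)

/-- The depth `d_{T,v}` of `v` in `T` (distance to the root). -/
noncomputable def depthOf (T : RTree V) (v : V) : ℕ :=
  sInf {n | T.pIter n v = some T.root}

/-- The subtree of `T` rooted at `c`. -/
noncomputable def subtreeAt (T : RTree V) (c : V) : RTree V where
  supp := T.descendants c
  root := c
  parent := fun w => if w = c then none else if w ∈ T.descendants c then T.parent w else none

/-- The vertex at depth `i` on the path from the root to `v`. -/
noncomputable def ancAt (T : RTree V) (v : V) (i : ℕ) : V :=
  (T.pIter (T.depthOf v - i) v).getD T.root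

/-- Insertion `T(i,x,v)` of a new vertex `x` at depth `i` along the root-to-`v` path:
`i = 0` makes `x` the new root, `i = d_{T,v}+1` adds `x` as a new child of `v`, and
for `1 ≤ i ≤ d_{T,v}` the `i`-th edge of the root-to-`v` path is subdivided by `x`. -/
noncomputable def insertAt (T : RTree V) (i : ℕ) (x v : V) : RTree V :=
  if i = 0 then
    { supp := insert x T.supp
      root := x
      parent := fun w => if w = x then none else if w = T.root then some x else T.parent w }
  else if i = T.depthOf v + 1 then
    { supp := insert x T.supp
      root := T.root
      parent := fun w => if w = x then some v else T.parent w }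
  else
    { supp := insert x T.supp
      root := T.root
      parent := fun w =>
        if w = x then some (T.ancAt v (i - 1))
        else if w = T.ancAt v i then some x
        else T.parent w }

/-- Elimination `p(T,x)` of a vertex `x` (meaningful when `x` has at most one child). -/
noncomputable def elim (T : RTree V) (x : V) : RTree V where
  supp := T.supp \ {x}
  root :=
    if T.root = x then (if h : ∃ w, T.parent w = some x then h.choose else T.root) else T.root
  parent := fun w =>
    if w = x then none
    else if T.parent w = some x then T.parent x
    else T.parent w

end RTree

/-- Reachability inside the vertex set `s`, i.e. in the induced subgraph `G[s]`. -/
def reachWithin (G : SimpleGraph V) (s : Set V) : V → V → Prop :=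
  Relation.ReflTransGen (fun a b => a ∈ s ∧ b ∈ s ∧ G.Adj a b)

/-- Recursive definition of a search tree: the children of the root are the roots of
search trees on the connected components of the graph minus the root. -/
inductive IsSearchTreeRec {V : Type u} (G : SimpleGraph V) : RTree V → Prop
  | intro (T : RTree V) (hwf : T.WF)
      (hconn : ∀ a ∈ T.supp, ∀ b ∈ T.supp, reachWithin G T.supp a b)
      (hcomp : ∀ c, T.parent c = some T.root →
        ∀ w, w ∈ T.descendants c ↔
          (w ∈ T.supp ∧ w ≠ T.root ∧ reachWithin G (T.supp \ {T.root}) c w))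
      (hrec : ∀ c, T.parent c = some T.root → IsSearchTreeRec G (T.subtreeAt c)) :
      IsSearchTreeRec G T

/-- `T` is a search tree on the induced subgraph `G[s]`. -/
def IsSearchTreeOn (G : SimpleGraph V) (s : Set V) (T : RTree V) : Prop :=
  T.supp = s ∧ IsSearchTreeRec G T

/-- `T` is a search tree on `G`. -/
def IsSearchTree (G : SimpleGraph V) (T : RTree V) : Prop :=
  IsSearchTreeOn G Set.univ T

/-- The `uv`-rotation of `T` (for `v` a child of `u`): `u` becomes a child of `v`, `v` takes
`u`'s old parent, and each subtree `S` of `v` is reattached below `u` iff `u` has a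
`G`-neighbour in `S`. -/
noncomputable def rotate (G : SimpleGraph V) (T : RTree V) (u v : V) : RTree V where
  supp := T.supp
  root := if T.root = u then v else T.root
  parent := fun w =>
    if w = v then T.parent u
    else if w = u then some v
    else if T.parent w = some v then
      (if ∃ z ∈ T.descendants w, G.Adj u z then some u else some v)
    else T.parent w

def IsRotation (G : SimpleGraph V) (S S' : RTree V) : Prop :=
  ∃ u v, S.parent v = some u ∧ S' = rotate G S u v

def rotAdj (G : SimpleGraph V) (S S' : RTree V) : Prop :=
  S ≠ S' ∧ (IsRotation G S S' ∨ IsRotation G S' S)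

/-- The rotation graph of the induced subgraph `G[s]`: vertices are the search trees on
`G[s]`, two trees being adjacent iff they differ by a single rotation. -/
def rotationGraphOn (G : SimpleGraph V) (s : Set V) :
    SimpleGraph {T : RTree V // IsSearchTreeOn G s T} where
  Adj T T' := rotAdj G T.1 T'.1
  symm := ⟨fun T T' h => ⟨Ne.symm h.1, Or.symm h.2⟩⟩
  loopless := ⟨fun T h => h.1 rfl⟩

/-- A vertex of `K` of maximal depth in `T` (the vertex `v_{λ(T)}`). -/
noncomputable def deepestIn (T : RTree V) (K : Set V) : V :=
  if h : ∃ u, u ∈ K ∧ ∀ w ∈ K, T.depthOf w ≤ T.depthOf u then h.choose else T.root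

/-- `u` and `v` have different relative order in `T` and `T'`. -/
def diffRelOrder (T T' : RTree V) (u v : V) : Prop :=
  (T.isAncestor u v ∧ ¬ T'.isAncestor u v) ∨ (¬ T.isAncestor u v ∧ T'.isAncestor u v)

/-- The step from `S` to `S'` is a rotation of the pair `u`, `v`. -/
def isUVStep (G : SimpleGraph V) (u v : V) (S S' : RTree V) : Prop :=
  (S.parent v = some u ∧ S' = rotate G S u v) ∨ (S.parent u = some v ∧ S' = rotate G S v u)

/-- A threshold graph: obtainable from the one-vertex graph by repeatedly adding either an
isolated vertex or a universal vertex. -/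
def IsThresholdGraph {V : Type u} [Fintype V] (G : SimpleGraph V) : Prop :=
  ∃ e : Fin (Fintype.card V) ≃ V,
    ∀ i : Fin (Fintype.card V),
      (∀ j, j < i → ¬ G.Adj (e i) (e j)) ∨ (∀ j, j < i → G.Adj (e i) (e j))

/-- The complete split graph `SPK_{p,q}`: a clique of size `p` completely joined to an
independent set of size `q`. -/
def completeSplitGraph (p q : ℕ) : SimpleGraph (Fin p ⊕ Fin q) where
  Adj a b := a ≠ b ∧ (a.isLeft = true ∨ b.isLeft = true)
  symm := ⟨fun a b h => ⟨Ne.symm h.1, Or.symm h.2⟩⟩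
  loopless := ⟨fun a h => h.1 rfl⟩

section ElimAux
open Relation

variable {V : Type u}

lemma RTree.ext' {T₁ T₂ : RTree V} (h1 : T₁.supp = T₂.supp) (h2 : T₁.root = T₂.root)
    (h3 : T₁.parent = T₂.parent) : T₁ = T₂ := by
  cases T₁; cases T₂; simp_all

section RelAux
variable {α : Type*} {r : α → α → Prop}

lemma det_comp (hdet : ∀ ⦃a b c⦄, r a b → r a c → b = c) {a b c : α}
    (hab : Relation.ReflTransGen r a b) (hac : Relation.ReflTransGen r a c) :
    Relation.ReflTransGen r b c ∨ Relation.ReflTransGen r c b := by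
  induction hab using ReflTransGen.head_induction_on generalizing c with
  | refl => exact Or.inl hac
  | head h' h ih =>
    rcases hac.cases_head with rfl | ⟨d, had, hdc⟩
    · exact Or.inr (ReflTransGen.head h' h)
    · exact ih (hdet h' had ▸ hdc)

lemma det_noCycle (hdet : ∀ ⦃a b c⦄, r a b → r a c → b = c) {root : α}
    (hroot : ∀ b, ¬ r root b) {a : α} (har : Relation.ReflTransGen r a root) :
    ¬ Relation.TransGen r a a := by
  induction har using ReflTransGen.head_induction_on with
  | refl =>
    intro h
    obtain ⟨y, hy, -⟩ := TransGen.head'_iff.mp h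
    exact hroot y hy
  | head h' h ih =>
    intro hcyc
    obtain ⟨y, hy, hya⟩ := TransGen.head'_iff.mp hcyc
    have hy' : y = _ := hdet hy h'
    subst hy'
    exact ih (TransGen.tail' hya h')

lemma rtg_of_rtg_steps {p : α → α → Prop} (h : ∀ ⦃a b⦄, r a b → Relation.ReflTransGen p a b)
    {a b : α} (hab : Relation.ReflTransGen r a b) : Relation.ReflTransGen p a b := by
  induction hab with
  | refl => exact ReflTransGen.refl
  | tail _ hstep ih => exact ih.trans (h hstep)
end RelAux

section ReachAux
variable {G : SimpleGraph V} {s : Set V}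

lemma reachWithin_mono {t : Set V} (hst : s ⊆ t) {a b : V} (h : reachWithin G s a b) :
    reachWithin G t a b :=
  Relation.ReflTransGen.mono (r := fun a b => a ∈ s ∧ b ∈ s ∧ G.Adj a b)
    (p := fun a b => a ∈ t ∧ b ∈ t ∧ G.Adj a b)
    (fun _ _ hx => ⟨hst hx.1, hst hx.2.1, hx.2.2⟩) a b h

lemma reachWithin_symm {a b : V} (h : reachWithin G s a b) : reachWithin G s b a := by
  induction h with
  | refl => exact ReflTransGen.refl
  | tail _ hstep ih => exact ReflTransGen.head ⟨hstep.2.1, hstep.1, hstep.2.2.symm⟩ ih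

lemma reachWithin_subst {x v : V} (hv : v ∈ s) (hvx : v ≠ x)
    (hN : ∀ z, G.Adj x z → z = v ∨ G.Adj v z) {a b : V} (h : reachWithin G s a b) :
    reachWithin G (s \ {x}) (if a = x then v else a) (if b = x then v else b) := by
  induction h with
  | refl => exact ReflTransGen.refl
  | @tail b' b _ hstep ih =>
    refine ih.trans ?_
    obtain ⟨hb's, hbs, hadj⟩ := hstep
    by_cases hb' : b' = x <;> by_cases hb : b = x <;> simp only [hb', hb, if_pos, if_neg,
      if_true, if_false]
    · exact absurd (hb' ▸ hb ▸ hadj) (G.irrefl)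
    · rcases hN b (hb' ▸ hadj) with rfl | hvb
      · exact ReflTransGen.refl
      · exact ReflTransGen.single ⟨⟨hv, hvx⟩, ⟨hbs, hb⟩, hvb⟩
    · rcases hN b' (hb ▸ hadj).symm with rfl | hvb'
      · exact ReflTransGen.refl
      · exact ReflTransGen.single ⟨⟨hb's, hb'⟩, ⟨hv, hvx⟩, hvb'.symm⟩
    · exact ReflTransGen.single ⟨⟨hb's, hb'⟩, ⟨hbs, hb⟩, hadj⟩

lemma reachWithin_extract {a b : V} (h : reachWithin G s a b) :
    b = a ∨ ∃ z, z ∈ s ∧ G.Adj a z ∧ reachWithin G (s \ {a}) z b := by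
  induction h with
  | refl => exact Or.inl rfl
  | @tail b' b _ hstep ih =>
    obtain ⟨hb's, hbs, hadj⟩ := hstep
    by_cases hb'a : b' = a
    · subst hb'a
      exact Or.inr ⟨b, hbs, hadj, ReflTransGen.refl⟩
    · by_cases hba : b = a
      · exact Or.inl hba
      · rcases ih with rfl | ⟨z, hzs, hza, hz⟩
        · exact absurd rfl hb'a
        · exact Or.inr ⟨z, hzs, hza,
            hz.tail ⟨⟨hb's, hb'a⟩, ⟨hbs, hba⟩, hadj⟩⟩

lemma reachWithin_shrink {x c : V} (hx : ∀ z, z ∈ s → reachWithin G s c z → z ≠ x)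
    {w : V} (h : reachWithin G s c w) : reachWithin G (s \ {x}) c w := by
  induction h with
  | refl => exact ReflTransGen.refl
  | @tail b' b hh hstep ih =>
    exact ih.tail ⟨⟨hstep.1, hx b' hstep.1 hh⟩, ⟨hstep.2.1, hx b hstep.2.1 (hh.tail hstep)⟩,
      hstep.2.2⟩
end ReachAux
end ElimAux
section MainLemma
open Relation

variable {V : Type u}

lemma elim_main [Fintype V] (G' : SimpleGraph V) (x v : V) (hxv : x ≠ v)
    (hN : ∀ z : V, (z = x ∨ G'.Adj x z) → (z = v ∨ G'.Adj v z)) :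
    ∀ (n : ℕ) (T : RTree V), T.supp.ncard ≤ n → IsSearchTreeRec G' T → x ∈ T.supp →
      T.isAncestor x v →
      (∀ a b, T.parent a = some x → T.parent b = some x → a = b)
        ∧ IsSearchTreeOn G' (T.supp \ {x}) (T.elim x) := by
  intro n
  induction n with
  | zero =>
    intro T hcard _ hx _
    have : 0 < T.supp.ncard := (Set.ncard_pos (Set.toFinite _)).mpr ⟨x, hx⟩
    omega
  | succ n ih =>
    intro T hcard hT hx hanc
    obtain ⟨T2, hwf, hconn, hcomp, hrec⟩ := hT
    obtain ⟨h1, h2, h3, h4, h5⟩ := hwf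
    have hdet : ∀ ⦃a b c : V⦄, T.parentRel a b → T.parentRel a c → b = c := by
      intro a b c hab hac
      simp only [RTree.parentRel] at hab hac
      rw [hab] at hac
      exact Option.some.inj hac
    have hrootstep : ∀ b, ¬ T.parentRel T.root b := by
      intro b hb
      simp only [RTree.parentRel, h2] at hb
      exact nomatch hb
    have hnoc : ∀ a, ReflTransGen T.parentRel a T.root → ¬ TransGen T.parentRel a a :=
      fun a h => det_noCycle hdet hrootstep h
    have hsupp_of_pr : ∀ {a b : V}, T.parentRel a b → a ∈ T.supp := by
      intro a b h
      by_contra hna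
      simp only [RTree.parentRel, h3 a hna] at h
      exact nomatch h
    have hanc' : ReflTransGen T.parentRel v x := hanc
    have hv_supp : v ∈ T.supp := by
      rcases hanc'.cases_head with heq | ⟨c, hvc, -⟩
      · exact absurd heq.symm hxv
      · exact hsupp_of_pr hvc
    obtain ⟨cx, hvcx, hcx⟩ : ∃ cx, ReflTransGen T.parentRel v cx ∧ T.parentRel cx x := by
      rcases hanc'.cases_tail with heq | h
      · exact absurd heq hxv
      · exact h
    have hcx_supp : cx ∈ T.supp := hsupp_of_pr hcx
    have hcxne : cx ≠ x := by
      intro hcc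
      rw [hcc] at hcx
      exact hnoc x (h5 x hx) (TransGen.single hcx)
    by_cases hr : T.root = x
    · -- CASE A : x is the root
      have key : ∀ p q : V, T.parentRel p x → T.parentRel q x →
          ReflTransGen T.parentRel p q → p = q := by
        intro p q hp hq hpq
        rcases hpq.cases_head with rfl | ⟨y, hpy, hyq⟩
        · rfl
        · have hyx : y = x := hdet hpy hp
          rw [hyx] at hyq
          rcases hyq.cases_head with heq | ⟨z, hxz, -⟩
          · rw [← heq] at hq
            exact absurd (TransGen.single hq) (hnoc x (h5 x hx))
          · rw [← hr] at hxz
            exact absurd hxz (hrootstep z)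
      have huniq : ∀ a b, T.parent a = some x → T.parent b = some x → a = b := by
        intro a b ha hb
        have ha' : T.parentRel a x := ha
        have hb' : T.parentRel b x := hb
        have hchild : ∀ c : V, T.parentRel c x → ReflTransGen T.parentRel v c := by
          intro c hc
          have hc_supp := hsupp_of_pr hc
          have hcnex : c ≠ x := by
            intro hcc
            rw [hcc] at hc
            exact hnoc x (h5 x hx) (TransGen.single hc)
          rcases reachWithin_extract (hconn x hx c hc_supp) with heq | ⟨z, hzs, hadj, hz⟩
          · exact absurd heq hcnex
          · have hvz : reachWithin G' (T.supp \ {x}) v c := by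
              rcases hN z (Or.inr hadj) with rfl | hvz
              · exact hz
              · have hvmem : v ∈ T.supp \ {x} :=
                  ⟨hv_supp, fun hh => hxv (Set.mem_singleton_iff.mp hh).symm⟩
                have hzmem : z ∈ T.supp \ {x} :=
                  ⟨hzs, fun hh => hadj.ne' (Set.mem_singleton_iff.mp hh)⟩
                exact ReflTransGen.head ⟨hvmem, hzmem, hvz⟩ hz
            have hcr : T.parent c = some T.root := by rw [hr]; exact hc
            have hvdesc : v ∈ T.descendants c := by
              refine (hcomp c hcr v).2 ⟨hv_supp, ?_, ?_⟩
              · rw [hr]; exact fun hh => hxv hh.symm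
              · rw [hr]; exact reachWithin_symm hvz
            exact hvdesc.2
        rcases det_comp hdet (hchild a ha') (hchild b hb') with h | h
        · exact key a b ha' hb' h
        · exact (key b a hb' ha' h).symm
      have hxnotdesc : x ∉ T.descendants cx := by
        rintro ⟨-, hchain⟩
        exact hnoc cx (h5 cx hcx_supp) (TransGen.head' hcx hchain)
      have hsuppeq : T.supp \ {x} = T.descendants cx := by
        ext w
        constructor
        · rintro ⟨hws, hwx⟩
          have hwx' : w ≠ x := fun hh => hwx (Set.mem_singleton_iff.mpr hh)
          refine ⟨hws, ?_⟩
          have hwchain : ReflTransGen T.parentRel w x := by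
            have := h5 w hws
            rwa [hr] at this
          rcases hwchain.cases_tail with heq2 | ⟨c, hwc, hcxx⟩
          · exact absurd heq2.symm hwx'
          · have hccx : c = cx := huniq c cx hcxx hcx
            rw [← hccx]
            exact hwc
        · rintro ⟨hws, hchain⟩
          refine ⟨hws, fun hh => ?_⟩
          have hwx' : w = x := Set.mem_singleton_iff.mp hh
          rw [hwx'] at hchain
          exact hxnotdesc ⟨hx, hchain⟩
      have hchoose : ∃ w, T.parent w = some x := ⟨cx, hcx⟩
      have hrootA : (T.elim x).root = cx := by
        simp only [RTree.elim]
        rw [if_pos hr, dif_pos hchoose]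
        exact huniq _ cx hchoose.choose_spec hcx
      have heqA : T.elim x = T.subtreeAt cx := by
        refine RTree.ext' hsuppeq hrootA ?_
        · funext w
          simp only [RTree.elim, RTree.subtreeAt]
          by_cases hwx : w = x
          · subst hwx
            rw [if_pos rfl, if_neg (fun hh : w = cx => hcxne hh.symm),
              if_neg hxnotdesc]
          · rw [if_neg hwx]
            by_cases hwcx : w = cx
            · rw [if_pos (show T.parent w = some x by rw [hwcx]; exact hcx), if_pos hwcx]
              rw [← hr]
              exact h2
            · have hnotchild : T.parent w ≠ some x := fun hh => hwcx (huniq w cx hh hcx)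
              rw [if_neg hnotchild, if_neg hwcx]
              by_cases hwd : w ∈ T.descendants cx
              · rw [if_pos hwd]
              · rw [if_neg hwd]
                apply h3
                intro hws
                exact hwd (hsuppeq ▸ (⟨hws, fun hh => hwx (Set.mem_singleton_iff.mp hh)⟩ :
                  w ∈ T.supp \ {x}))
      refine ⟨huniq, rfl, ?_⟩
      rw [heqA]
      exact hrec cx (by rw [hr]; exact hcx)
    · -- CASE B : x is not the root
      have hxnr : x ≠ T.root := fun h => hr h.symm
      obtain ⟨u, hu_supp, hux⟩ := h4 x hx hxnr
      have hux' : T.parentRel x u := hux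
      have hune : u ≠ x := by
        intro hh
        rw [hh] at hux'
        exact hnoc x (h5 x hx) (TransGen.single hux')
      have hxchain : ReflTransGen T.parentRel x T.root := h5 x hx
      obtain ⟨c0, hxc0, hc0r⟩ :
          ∃ c0, ReflTransGen T.parentRel x c0 ∧ T.parentRel c0 T.root := by
        rcases hxchain.cases_tail with heq | h
        · exact absurd heq.symm hxnr
        · exact h
      have hc0_supp : c0 ∈ T.supp := hsupp_of_pr hc0r
      have hc0nr : c0 ≠ T.root := by
        intro hh
        rw [hh] at hc0r
        exact hrootstep _ hc0r
      have hDr : ∀ w ∈ T.descendants c0, w ≠ T.root :=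
        fun w hw => ((hcomp c0 hc0r w).1 hw).2.1
      have hxD : x ∈ T.descendants c0 := ⟨hx, hxc0⟩
      have hSparent : ∀ w, (T.subtreeAt c0).parent w =
          if w = c0 then none
          else if w ∈ T.descendants c0 then T.parent w else none := by
        intro w
        simp only [RTree.subtreeAt]
      have hnocc0 : ¬ TransGen T.parentRel c0 c0 := hnoc c0 (h5 c0 hc0_supp)
      have hTS : ∀ a, ReflTransGen T.parentRel a x →
          ReflTransGen (T.subtreeAt c0).parentRel a x := by
        intro a ha
        induction ha using ReflTransGen.head_induction_on with
        | refl => exact ReflTransGen.refl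
        | @head p q h' h ihs =>
          refine ReflTransGen.head ?_ ihs
          have hpD : p ∈ T.descendants c0 :=
            ⟨hsupp_of_pr h', (ReflTransGen.head h' h).trans hxc0⟩
          have hpc0 : p ≠ c0 := by
            intro hh
            rw [hh] at h'
            exact hnocc0 (TransGen.head' h' (h.trans hxc0))
          show (T.subtreeAt c0).parent p = some q
          rw [hSparent, if_neg hpc0, if_pos hpD]
          exact h'
      have hancS : ReflTransGen (T.subtreeAt c0).parentRel v x := hTS v hanc'
      have hcard' : (T.subtreeAt c0).supp.ncard ≤ n := by
        have hsub : (T.subtreeAt c0).supp ⊆ T.supp := fun w hw => hw.1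
        have hne : T.supp ≠ (T.subtreeAt c0).supp := by
          intro hh
          have : T.root ∈ (T.subtreeAt c0).supp := by rw [← hh]; exact h1
          exact hDr T.root this rfl
        have hlt := Set.ncard_lt_ncard (hsub.ssubset_of_ne (fun hh => hne hh.symm))
          (Set.toFinite _)
        omega
      obtain ⟨uniqS, hUsupp, Urec⟩ := ih (T.subtreeAt c0) hcard' (hrec c0 hc0r) hxD hancS
      have huniqT : ∀ a b, T.parent a = some x → T.parent b = some x → a = b := by
        have hSx : ∀ c : V, T.parent c = some x → (T.subtreeAt c0).parent c = some x := by
          intro c hc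
          have hcne : c ≠ c0 := by
            intro hh
            rw [hh] at hc
            exact hxnr (hdet (show T.parentRel c0 x from hc) hc0r)
          have hcd : c ∈ T.descendants c0 :=
            ⟨hsupp_of_pr (show T.parentRel c x from hc),
              ReflTransGen.head (show T.parentRel c x from hc) hxc0⟩
          rw [hSparent, if_neg hcne, if_pos hcd]
          exact hc
        exact fun a b ha hb => uniqS a b (hSx a ha) (hSx b hb)
      have UrecKeep := Urec
      obtain ⟨TU, UWF, Uconn, Ucomp, Urec2⟩ := Urec
      have U1 := UWF.1
      have U2 := UWF.2.1
      have U3 := UWF.2.2.1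
      have U5 := UWF.2.2.2.2
      have hUsuppD : ((T.subtreeAt c0).elim x).supp = T.descendants c0 \ {x} := rfl
      have hcxD : cx ∈ T.descendants c0 :=
        ⟨hcx_supp, ReflTransGen.head hcx hxc0⟩
      have key2 : ∀ p q : V, T.parentRel p T.root → T.parentRel q T.root →
          ReflTransGen T.parentRel p q → p = q := by
        intro p q hp hq hpq
        rcases hpq.cases_head with heq | ⟨y, hpy, hyq⟩
        · exact heq
        · have hyx : y = T.root := hdet hpy hp
          rw [hyx] at hyq
          rcases hyq.cases_head with heq | ⟨z, hxz, -⟩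
          · rw [← heq] at hq
            exact absurd hq (hrootstep _)
          · exact absurd hxz (hrootstep z)
      obtain ⟨c0', hc0'root, hc0'parentE, hc0'D, hc0'nx, hc0'chain, hc0'alt⟩ :
          ∃ c0', ((T.subtreeAt c0).elim x).root = c0' ∧
            (T.elim x).parent c0' = some T.root ∧
            c0' ∈ T.descendants c0 ∧ c0' ≠ x ∧
            ReflTransGen T.parentRel c0' c0 ∧
            ((c0 ≠ x ∧ c0' = c0) ∨ (c0 = x ∧ T.parent c0' = some x)) := by
        by_cases hc0x : c0 = x
        · -- x is a child of the root; c0' = cx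
          have hur : u = T.root := by
            rw [hc0x] at hc0r
            exact hdet hux' hc0r
          have hScx : (T.subtreeAt c0).parent cx = some x := by
            rw [hSparent, if_neg (fun hh => hcxne (hh.trans hc0x)), if_pos hcxD]
            exact hcx
          have hEx : ∃ w, (T.subtreeAt c0).parent w = some x := ⟨cx, hScx⟩
          refine ⟨cx, ?_, ?_, hcxD, hcxne, ?_, Or.inr ⟨hc0x, hcx⟩⟩
          · simp only [RTree.elim]
            rw [if_pos (show (T.subtreeAt c0).root = x from hc0x), dif_pos hEx]
            have hspec := hEx.choose_spec
            rw [hSparent] at hspec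
            by_cases hh1 : hEx.choose = c0
            · rw [if_pos hh1] at hspec
              exact absurd hspec (by simp)
            · rw [if_neg hh1] at hspec
              by_cases hh2 : hEx.choose ∈ T.descendants c0
              · rw [if_pos hh2] at hspec
                exact huniqT _ cx hspec hcx
              · rw [if_neg hh2] at hspec
                exact absurd hspec (by simp)
          · simp only [RTree.elim]
            rw [if_neg hcxne, if_pos (show T.parent cx = some x from hcx), hux, hur]
          · rw [hc0x]
            exact ReflTransGen.single hcx
        · -- c0' = c0
          refine ⟨c0, ?_, ?_, ⟨hc0_supp, ReflTransGen.refl⟩, hc0x, ReflTransGen.refl,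
            Or.inl ⟨hc0x, rfl⟩⟩
          · simp only [RTree.elim]
            rw [if_neg (show ¬ (T.subtreeAt c0).root = x from hc0x)]
            rfl
          · simp only [RTree.elim]
            rw [if_neg hc0x,
              if_neg (fun hh : T.parent c0 = some x => hxnr (hdet (show T.parentRel c0 x from hh) hc0r))]
            exact hc0r
      have K1 : ∀ w, w ∈ T.descendants c0 → w ≠ x → w ≠ c0' →
          ((T.subtreeAt c0).elim x).parent w = (T.elim x).parent w := by
        intro w hwD hwx hwc0'
        have hwc0 : w ≠ c0 := by
          intro hh
          rcases hc0'alt with ⟨-, h⟩ | ⟨h, -⟩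
          · exact hwc0' (hh.trans h.symm)
          · exact hwx (hh.trans h)
        simp only [RTree.elim]
        rw [if_neg hwx, if_neg hwx, hSparent, if_neg hwc0, if_pos hwD]
        by_cases hch : T.parent w = some x
        · rw [if_pos hch, if_pos hch, hSparent]
          have hxnc0 : x ≠ c0 := by
            intro hh
            rcases hc0'alt with ⟨h, -⟩ | ⟨-, h⟩
            · exact h hh.symm
            · exact hwc0' ((huniqT w cx hch hcx).trans (huniqT c0' cx h hcx).symm)
          rw [if_neg hxnc0, if_pos hxD]
        · rw [if_neg hch, if_neg hch]
      have hEparent : ∀ w, (T.elim x).parent w =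
          if w = x then none
          else if T.parent w = some x then T.parent x else T.parent w := by
        intro w
        simp only [RTree.elim]
      have hE_step : ∀ a b, (T.elim x).parentRel a b → ReflTransGen T.parentRel a b := by
        intro a b hab
        have hab' : (T.elim x).parent a = some b := hab
        rw [hEparent] at hab'
        by_cases hax : a = x
        · rw [if_pos hax] at hab'
          exact absurd hab' (by simp)
        · rw [if_neg hax] at hab'
          by_cases hpx : T.parent a = some x
          · rw [if_pos hpx] at hab'
            exact ReflTransGen.head (show T.parentRel a x from hpx)
              (ReflTransGen.single (show T.parentRel x b from hab'))
          · rw [if_neg hpx] at hab'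
            exact ReflTransGen.single hab'
      have revE : ∀ a b, ReflTransGen (T.elim x).parentRel a b →
          ReflTransGen T.parentRel a b :=
        fun a b h => rtg_of_rtg_steps (fun p q hpq => hE_step p q hpq) h
      have hLtrans : ∀ a b, ReflTransGen T.parentRel a b → ¬ ReflTransGen T.parentRel x b →
          ReflTransGen (T.elim x).parentRel a b := by
        intro a b hab hnb
        induction hab using ReflTransGen.head_induction_on with
        | refl => exact ReflTransGen.refl
        | @head p q h' h ihs =>
          have hqx : q ≠ x := by
            intro hh
            rw [hh] at h
            exact hnb h
          have hpx : p ≠ x := by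
            intro hh
            rw [hh] at h'
            exact hnb (ReflTransGen.head h' h)
          refine ReflTransGen.head ?_ ihs
          show (T.elim x).parent p = some q
          rw [hEparent, if_neg hpx,
            if_neg (show ¬ T.parent p = some x from fun hh => hqx (hdet h' hh))]
          exact h'
      have hL0 : ∀ a, ReflTransGen T.parentRel a T.root → ¬ ReflTransGen T.parentRel a x →
          ReflTransGen (T.elim x).parentRel a T.root := by
        intro a har
        induction har using ReflTransGen.head_induction_on with
        | refl => exact fun _ => ReflTransGen.refl
        | @head p q h' h ihs =>
          intro hna
          have hqnx : ¬ ReflTransGen T.parentRel q x := fun hh =>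
            hna (ReflTransGen.head h' hh)
          have hpx : p ≠ x := by
            intro hh
            exact hna (hh ▸ ReflTransGen.refl)
          refine ReflTransGen.head ?_ (ihs hqnx)
          show (T.elim x).parent p = some q
          rw [hEparent, if_neg hpx,
            if_neg (show ¬ T.parent p = some x from
              fun hh => hqnx ((hdet h' hh) ▸ ReflTransGen.refl))]
          exact h'
      have hunx : ¬ ReflTransGen T.parentRel u x := fun hh =>
        hnoc x (h5 x hx) (TransGen.head' hux' hh)
      have huroot : ReflTransGen T.parentRel u T.root := by
        rcases hxchain.cases_head with heq | ⟨c, hxc, hcr⟩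
        · exact absurd heq hxnr
        · rw [← hdet hxc hux']
          exact hcr
      have hEu := hL0 u huroot hunx
      have hL1 : ∀ w, ReflTransGen T.parentRel w x → w ≠ x →
          ReflTransGen (T.elim x).parentRel w T.root := by
        intro w hw
        induction hw using ReflTransGen.head_induction_on with
        | refl => exact fun h => absurd rfl h
        | @head p q h' h ihs =>
          intro hpx
          by_cases hqx : q = x
          · rw [hqx] at h'
            refine ReflTransGen.head ?_ hEu
            show (T.elim x).parent p = some u
            rw [hEparent, if_neg hpx, if_pos (show T.parent p = some x from h')]
            exact hux
          · refine ReflTransGen.head ?_ (ihs hqx)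
            show (T.elim x).parent p = some q
            rw [hEparent, if_neg hpx,
              if_neg (show ¬ T.parent p = some x from fun hh => hqx (hdet h' hh))]
            exact h'
      have hE5 : ∀ w ∈ T.supp \ {x}, ReflTransGen (T.elim x).parentRel w T.root := by
        rintro w ⟨hws, hwx⟩
        have hwx' : w ≠ x := fun hh => hwx (Set.mem_singleton_iff.mpr hh)
        by_cases hwreach : ReflTransGen T.parentRel w x
        · exact hL1 w hwreach hwx'
        · exact hL0 w (h5 w hws) hwreach
      have hE1 : (T.elim x).root = T.root := by
        simp only [RTree.elim]
        rw [if_neg hr]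
      have hwfE : (T.elim x).WF := by
        refine ⟨?_, ?_, ?_, ?_, ?_⟩
        · rw [hE1]
          exact ⟨h1, fun hh => hr (Set.mem_singleton_iff.mp hh)⟩
        · rw [hE1, hEparent, if_neg hr, h2]
          simp
        · intro w hw
          rw [hEparent]
          by_cases hwx : w = x
          · rw [if_pos hwx]
          · have hws : w ∉ T.supp := fun hh =>
              hw ⟨hh, fun hh2 => hwx (Set.mem_singleton_iff.mp hh2)⟩
            rw [if_neg hwx, h3 w hws]
            simp [h3 w hws]
        · intro w hw hwroot
          rw [hE1] at hwroot
          obtain ⟨hws, hwxm⟩ := hw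
          have hwx : w ≠ x := fun hh => hwxm (Set.mem_singleton_iff.mpr hh)
          obtain ⟨p, hp_supp, hp⟩ := h4 w hws hwroot
          rw [hEparent, if_neg hwx]
          by_cases hpx : T.parent w = some x
          · refine ⟨u, ⟨hu_supp, fun hh => hune (Set.mem_singleton_iff.mp hh)⟩, ?_⟩
            rw [if_pos hpx]
            exact hux
          · refine ⟨p, ⟨hp_supp, fun hh => ?_⟩, ?_⟩
            · rw [Set.mem_singleton_iff] at hh
              rw [hh] at hp
              exact hpx hp
            · rw [if_neg hpx]
              exact hp
        · intro w hw
          show ReflTransGen (T.elim x).parentRel w (T.elim x).root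
          rw [hE1]
          exact hE5 w hw
      have hconnE : ∀ a ∈ T.supp \ {x}, ∀ b ∈ T.supp \ {x},
          reachWithin G' (T.supp \ {x}) a b := by
        rintro a ⟨has, hax⟩ b ⟨hbs, hbx⟩
        have hax' : a ≠ x := fun hh => hax (Set.mem_singleton_iff.mpr hh)
        have hbx' : b ≠ x := fun hh => hbx (Set.mem_singleton_iff.mpr hh)
        have := reachWithin_subst (G := G') (s := T.supp) hv_supp (Ne.symm hxv)
          (fun z hz => hN z (Or.inr hz)) (hconn a has b hbs)
        rwa [if_neg hax', if_neg hbx'] at this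
      have hchild : ∀ c, (T.elim x).parent c = some T.root →
          c = c0' ∨ (T.parent c = some T.root ∧ c ≠ c0) := by
        intro c hc
        have hcnex : c ≠ x := by
          intro hh
          rw [hEparent, if_pos hh] at hc
          exact nomatch hc
        by_cases hcchild : T.parent c = some x
        · rw [hEparent, if_neg hcnex, if_pos hcchild, hux] at hc
          have hur : u = T.root := Option.some.inj hc
          rcases hc0'alt with ⟨hne, -⟩ | ⟨-, hcc⟩
          · exfalso
            rcases hxc0.cases_head with heq | ⟨y, hxy, hyc0⟩
            · exact hne heq.symm
            · have hyu : y = u := hdet hxy hux'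
              rw [hyu, hur] at hyc0
              rcases hyc0.cases_head with heq2 | ⟨z, hrz, -⟩
              · rw [← heq2] at hc0r
                exact hrootstep _ hc0r
              · exact hrootstep z hrz
          · exact Or.inl (huniqT c c0' hcchild hcc)
        · rw [hEparent, if_neg hcnex, if_neg hcchild] at hc
          by_cases hcc0 : c = c0
          · rcases hc0'alt with ⟨-, h⟩ | ⟨hh, -⟩
            · exact Or.inl (hcc0.trans h.symm)
            · exact absurd (hcc0.trans hh) hcnex
          · exact Or.inr ⟨hc, hcc0⟩
      have hxnotdesc : ∀ c, T.parent c = some T.root → c ≠ c0 → x ∉ T.descendants c := by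
        rintro c hc hne ⟨-, hchain⟩
        rcases det_comp hdet hchain hxc0 with h | h
        · exact hne (key2 c c0 hc hc0r h)
        · exact hne (key2 c0 c hc0r hc h).symm
      have hdescE : ∀ c, T.parent c = some T.root → c ≠ c0 →
          (T.elim x).descendants c = T.descendants c := by
        intro c hc hne
        ext w
        constructor
        · rintro ⟨hw, hchain⟩
          exact ⟨hw.1, revE w c hchain⟩
        · rintro ⟨hws, hchain⟩
          have hwx : w ≠ x := by
            intro hh
            rw [hh] at hws hchain
            exact hxnotdesc c hc hne ⟨hws, hchain⟩
          exact ⟨⟨hws, fun hh => hwx (Set.mem_singleton_iff.mp hh)⟩,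
            hLtrans w c hchain (fun hh => hxnotdesc c hc hne ⟨hx, hh⟩)⟩
      have hsub2 : ∀ c, T.parent c = some T.root → c ≠ c0 →
          (T.elim x).subtreeAt c = T.subtreeAt c := by
        intro c hc hne
        refine RTree.ext' (hdescE c hc hne) rfl ?_
        funext w
        simp only [RTree.subtreeAt]
        rw [hdescE c hc hne]
        by_cases hwc : w = c
        · rw [if_pos hwc, if_pos hwc]
        · rw [if_neg hwc, if_neg hwc]
          by_cases hwd : w ∈ T.descendants c
          · rw [if_pos hwd, if_pos hwd]
            have hwx : w ≠ x := by
              intro hh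
              rw [hh] at hwd
              exact hxnotdesc c hc hne hwd
            rw [hEparent, if_neg hwx]
            by_cases hch : T.parent w = some x
            · exfalso
              obtain ⟨hws, hchain⟩ := hwd
              rcases hchain.cases_head with heq | ⟨y, hwy, hyc⟩
              · rw [heq] at hch
                exact hxnr (hdet (show T.parentRel c x from hch) hc)
              · have : y = x := hdet hwy (show T.parentRel w x from hch)
                rw [this] at hyc
                exact hxnotdesc c hc hne ⟨hx, hyc⟩
            · rw [if_neg hch]
          · rw [if_neg hwd, if_neg hwd]
      have hcomp2 : ∀ c, T.parent c = some T.root → c ≠ c0 → ∀ w,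
          w ∈ (T.elim x).descendants c ↔
            (w ∈ T.supp \ {x} ∧ w ≠ T.root ∧
              reachWithin G' ((T.supp \ {x}) \ {T.root}) c w) := by
        intro c hc hne w
        rw [hdescE c hc hne]
        constructor
        · intro hwd
          obtain ⟨hws, hwr, hreach⟩ := (hcomp c hc w).1 hwd
          have hwx : w ≠ x := by
            intro hh
            rw [hh] at hwd
            exact hxnotdesc c hc hne hwd
          refine ⟨⟨hws, fun hh => hwx (Set.mem_singleton_iff.mp hh)⟩, hwr, ?_⟩
          have htest : ∀ z, z ∈ T.supp \ {T.root} →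
              reachWithin G' (T.supp \ {T.root}) c z → z ≠ x := by
            intro z hzs hz hzx
            rw [hzx] at hzs hz
            exact hxnotdesc c hc hne
              ((hcomp c hc x).2 ⟨hzs.1,
                fun hh => hzs.2 (Set.mem_singleton_iff.mpr hh), hz⟩)
          have hshr := reachWithin_shrink htest hreach
          rwa [Set.diff_diff_comm] at hshr
        · rintro ⟨⟨hws, hwxm⟩, hwr, hreach⟩
          rw [Set.diff_diff_comm] at hreach
          exact (hcomp c hc w).2 ⟨hws, hwr, reachWithin_mono Set.diff_subset hreach⟩
      have hU_to_E : ∀ w, w ∈ T.descendants c0 \ {x} →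
          ReflTransGen (T.elim x).parentRel w c0' := by
        intro w hw
        have hchainU : ReflTransGen ((T.subtreeAt c0).elim x).parentRel w
            ((T.subtreeAt c0).elim x).root := U5 w hw
        rw [hc0'root] at hchainU
        refine rtg_of_rtg_steps ?_ hchainU
        intro p q hpq
        have hpq' : ((T.subtreeAt c0).elim x).parent p = some q := hpq
        have hpsupp : p ∈ ((T.subtreeAt c0).elim x).supp := by
          by_contra hns
          rw [U3 p hns] at hpq'
          exact nomatch hpq'
        have hproot : p ≠ c0' := by
          intro hh
          rw [← hc0'root] at hh
          rw [hh, U2] at hpq'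
          exact nomatch hpq'
        have hpD : p ∈ T.descendants c0 \ {x} := hpsupp
        refine ReflTransGen.single ?_
        show (T.elim x).parent p = some q
        rw [← K1 p hpD.1 (fun hh => hpD.2 (Set.mem_singleton_iff.mpr hh)) hproot]
        exact hpq'
      have hdescB : (T.elim x).descendants c0' = T.descendants c0 \ {x} := by
        ext w
        constructor
        · rintro ⟨hw, hchain⟩
          have hT' : ReflTransGen T.parentRel w c0' := revE w c0' hchain
          exact ⟨⟨hw.1, hT'.trans hc0'chain⟩, hw.2⟩
        · intro hw
          refine ⟨⟨hw.1.1, hw.2⟩, hU_to_E w hw⟩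
      have hc0'su : c0' ∈ ((T.subtreeAt c0).elim x).supp := by
        rw [← hc0'root]
        exact U1
      have hcompB : ∀ w, w ∈ (T.elim x).descendants c0' ↔
          (w ∈ T.supp \ {x} ∧ w ≠ T.root ∧
            reachWithin G' ((T.supp \ {x}) \ {T.root}) c0' w) := by
        intro w
        rw [hdescB]
        constructor
        · rintro ⟨hwD, hwxm⟩
          have hwr : w ≠ T.root := hDr w hwD
          refine ⟨⟨hwD.1, hwxm⟩, hwr, ?_⟩
          have hreach : reachWithin G' ((T.subtreeAt c0).elim x).supp c0' w :=
            Uconn c0' hc0'su w ⟨hwD, hwxm⟩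
          refine reachWithin_mono ?_ hreach
          rintro z ⟨hzD, hzxm⟩
          exact ⟨⟨hzD.1, hzxm⟩, fun hh => hDr z hzD (Set.mem_singleton_iff.mp hh)⟩
        · rintro ⟨⟨hws, hwxm⟩, hwr, hreach⟩
          rw [Set.diff_diff_comm] at hreach
          have hreach' : reachWithin G' (T.supp \ {T.root}) c0' w :=
            reachWithin_mono Set.diff_subset hreach
          have hc0'reach : reachWithin G' (T.supp \ {T.root}) c0 c0' :=
            ((hcomp c0 hc0r c0').1 ⟨hc0'D.1, hc0'chain⟩).2.2
          have hwD := (hcomp c0 hc0r w).2 ⟨hws, hwr, hc0'reach.trans hreach'⟩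
          exact ⟨hwD, hwxm⟩
      have hsubB : (T.elim x).subtreeAt c0' = (T.subtreeAt c0).elim x := by
        refine RTree.ext' ?_ hc0'root.symm ?_
        · show (T.elim x).descendants c0' = _
          rw [hdescB]
          rfl
        · funext w
          conv_lhs => simp only [RTree.subtreeAt]
          by_cases hwc : w = c0'
          · rw [if_pos hwc, hwc, ← hc0'root, U2]
          · rw [if_neg hwc, hdescB]
            by_cases hwd : w ∈ T.descendants c0 \ {x}
            · rw [if_pos hwd]
              exact (K1 w hwd.1 (fun hh => hwd.2 (Set.mem_singleton_iff.mpr hh)) hwc).symm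
            · rw [if_neg hwd]
              exact (U3 w hwd).symm
      refine ⟨huniqT, rfl, ?_⟩
      refine IsSearchTreeRec.intro _ hwfE ?_ ?_ ?_
      · exact hconnE
      · intro c hc
        rw [hE1] at hc ⊢
        rcases hchild c hc with heq | ⟨hparent, hne⟩
        · rw [heq]
          exact hcompB
        · exact hcomp2 c hparent hne
      · intro c hc
        rw [hE1] at hc
        rcases hchild c hc with heq | ⟨hparent, hne⟩
        · rw [heq, hsubB]
          exact UrecKeep
        · rw [hsub2 c hparent hne]
          exact hrec c hparent
end MainLemma

/-- if `N[x] ⊆ N[v]` and `v` is a descendant of `x` in a search tree `T'`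
on `G'`, then `x` has at most one child in `T'` and `p(T',x)` is a search tree on `G' − x`. -/
theorem elim_isSearchTree {V : Type u} [Fintype V] (G' : SimpleGraph V) (hG' : G'.Connected)
    (x v : V) (hxv : x ≠ v)
    (hN : ∀ z : V, (z = x ∨ G'.Adj x z) → (z = v ∨ G'.Adj v z))
    (T' : RTree V) (hT' : IsSearchTree G' T') (hdesc : T'.isAncestor x v) :
    (∀ a b, T'.parent a = some x → T'.parent b = some x → a = b)
    ∧ IsSearchTreeOn G' {x}ᶜ (T'.elim x) := by
  obtain ⟨hsupp, hrec⟩ := hT'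
  have hx : x ∈ T'.supp := by rw [hsupp]; trivial
  obtain ⟨h1, h2⟩ :=
    elim_main G' x v hxv hN T'.supp.ncard T' le_rfl hrec hx hdesc
  refine ⟨h1, ?_⟩
  have hseq : T'.supp \ {x} = ({x}ᶜ : Set V) := by
    rw [hsupp, ← Set.compl_eq_univ_diff]
  rwa [hseq] at h2
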